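/- Let A be an n-dimensional (n ≥ 2) non-degenerate evolution algebra over an algebraically closed field F of characteristic zero with dim(A²) = 1. If (A²)² = 0, then A is isomorphic to the evolution algebra I_n defined on a basis {e_1,...,e_n} by e_k² = e_1 + i·e_2 for all k (where i is a square root of −1 in F) and e_k e_l = 0 for k ≠ l. -/

import Mathlib

open Module


lemma exists_orthonormal {F : Type*} [Field F] [IsAlgClosed F] [CharZero F]
    {V : Type*} [AddCommGroup V] [Module F V] [FiniteDimensional F V]
    (B : LinearMap.BilinForm F V) (hB : B.IsSymm) (hnd : B.Nondegenerate) :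
    ∃ w : Basis (Fin (finrank F V)) F V, ∀ i j, B (w i) (w j) = if i = j then 1 else 0 := by
  have h2 : Invertible (2 : F) := invertibleOfNonzero two_ne_zero
  obtain ⟨v, hv⟩ := LinearMap.BilinForm.exists_orthogonal_basis (LinearMap.BilinForm.isSymm_iff.1 hB)
  have hd : ∀ i, B (v i) (v i) ≠ 0 := fun i =>
    LinearMap.BilinForm.iIsOrtho.not_isOrtho_basis_self_of_nondegenerate hv hnd i
  choose s hs using fun i => IsAlgClosed.exists_pow_nat_eq (B (v i) (v i)) (n := 2) (by norm_num)
  have hs0 : ∀ i, s i ≠ 0 := by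
    intro i h
    apply hd i
    rw [← hs i, h]; ring
  refine ⟨v.unitsSMul fun i => (Units.mk0 (s i) (hs0 i))⁻¹, fun i j => ?_⟩
  have hw : ∀ i, (v.unitsSMul fun i => (Units.mk0 (s i) (hs0 i))⁻¹) i = (s i)⁻¹ • v i := by
    intro i; rw [Basis.unitsSMul_apply]; rfl
  rw [hw, hw]
  simp only [map_smul, LinearMap.smul_apply, smul_eq_mul]
  rcases eq_or_ne i j with rfl | hij
  · simp only [if_pos rfl, smul_eq_mul]
    rw [← hs i]
    field_simp
    rw [if_pos trivial, div_self (hs0 i)]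
  · rw [if_neg hij, hv hij]
    simp

lemma key_basis {F : Type*} [Field F] [IsAlgClosed F] [CharZero F]
    (I : F) (hI : I * I = -1)
    {V : Type*} [AddCommGroup V] [Module F V] [FiniteDimensional F V]
    (B : LinearMap.BilinForm F V) (hB : B.IsSymm) (hnd : B.Nondegenerate)
    {u : V} (hu : u ≠ 0) (huu : B u u = 0) {m : ℕ} (hm : finrank F V = m + 2) :
    ∃ g : Basis (Fin (m + 2)) F V,
      (∀ i j, B (g i) (g j) = if i = j then 1 else 0) ∧ u = g 0 + I • g 1 := by
  -- find z with B u z = 1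
  obtain ⟨z, hz⟩ : ∃ z, B u z = 1 := by
    have hz0 : ∃ z₀, B u z₀ ≠ 0 := by
      by_contra h
      push_neg at h
      exact hu (hnd.1 u h)
    obtain ⟨z₀, hz₀⟩ := hz0
    exact ⟨(B u z₀)⁻¹ • z₀, by rw [map_smul, smul_eq_mul, inv_mul_cancel₀ hz₀]⟩
  have hzu : B z u = 1 := by rw [hB.eq z u, hz]
  obtain ⟨z', huz', hz'z'⟩ : ∃ z', B u z' = 1 ∧ B z' z' = 0 := by
    refine ⟨z - (B z z / 2) • u, ?_, ?_⟩
    · simp only [map_sub, map_smul, smul_eq_mul, hz, huu, mul_zero, sub_zero]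
    · simp only [map_sub, map_smul, LinearMap.sub_apply, LinearMap.smul_apply, smul_eq_mul,
        huu, hz, hzu]
      ring
  have hz'u : B z' u = 1 := by rw [hB.eq z' u, huz']
  obtain ⟨g0, g1, e00, e11, e01, hu'⟩ :
      ∃ g0 g1 : V, B g0 g0 = 1 ∧ B g1 g1 = 1 ∧ B g0 g1 = 0 ∧ u = g0 + I • g1 := by
    refine ⟨(2 : F)⁻¹ • u + z', (-(I / 2)) • u + I • z', ?_, ?_, ?_, ?_⟩
    · simp only [map_add, map_smul, LinearMap.add_apply, LinearMap.smul_apply, smul_eq_mul,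
        huu, huz', hz'u, hz'z']
      ring
    · simp only [map_add, map_smul, LinearMap.add_apply, LinearMap.smul_apply, smul_eq_mul,
        huu, huz', hz'u, hz'z']
      linear_combination -hI
    · simp only [map_add, map_smul, LinearMap.add_apply, LinearMap.smul_apply, smul_eq_mul,
        huu, huz', hz'u, hz'z']
      ring
    · have hex : ((2 : F)⁻¹ • u + z') + I • ((-(I / 2)) • u + I • z')
          = ((2 : F)⁻¹ + I * -(I / 2)) • u + (1 + I * I) • z' := by module
      have c1 : (2 : F)⁻¹ + I * -(I / 2) = 1 := by field_simp; linear_combination -hI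
      rw [hex, c1, hI, one_smul]
      norm_num
  have e10 : B g1 g0 = 0 := by rw [hB.eq g1 g0, e01]
  -- orthogonal complement machinery
  have hg0g0 : ¬ B.IsOrtho g0 g0 := by
    rw [LinearMap.BilinForm.isOrtho_def, e00]; exact one_ne_zero
  set W₁ : Submodule F V := B.orthogonal (F ∙ g0) with hW₁
  set B₁ : LinearMap.BilinForm F W₁ := B.restrict W₁ with hB₁
  have hndB₁ : B₁.Nondegenerate :=
    LinearMap.BilinForm.restrict_nondegenerate_orthogonal_spanSingleton B hnd hB.isRefl hg0g0
  have hsymB₁ : B₁.IsSymm := hB.restrict W₁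
  have hg1W₁ : g1 ∈ W₁ := by
    rw [hW₁, LinearMap.BilinForm.mem_orthogonal_iff]
    intro n hn
    obtain ⟨a, rfl⟩ := Submodule.mem_span_singleton.mp hn
    rw [map_smul, LinearMap.smul_apply, smul_eq_mul, e01,
      mul_zero]
  set g1' : W₁ := ⟨g1, hg1W₁⟩ with hg1'
  have hg1g1 : ¬ B₁.IsOrtho g1' g1' := by
    rw [LinearMap.BilinForm.isOrtho_def]
    show B g1 g1 ≠ 0
    rw [e11]; exact one_ne_zero
  set W₂ : Submodule F W₁ := B₁.orthogonal (F ∙ g1') with hW₂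
  set B₂ : LinearMap.BilinForm F W₂ := B₁.restrict W₂ with hB₂def
  have hndB₂ : B₂.Nondegenerate :=
    LinearMap.BilinForm.restrict_nondegenerate_orthogonal_spanSingleton B₁ hndB₁ hsymB₁.isRefl
      hg1g1
  have hsymB₂ : B₂.IsSymm := hsymB₁.restrict W₂
  -- dimensions
  have hd₁ : finrank F W₁ = m + 1 := by
    rw [hW₁, LinearMap.BilinForm.finrank_orthogonal hnd,
      finrank_span_singleton (LinearMap.BilinForm.ne_zero_of_not_isOrtho_self g0 hg0g0), hm]
    omega
  have hd₂ : finrank F W₂ = m := by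
    rw [hW₂, LinearMap.BilinForm.finrank_orthogonal hndB₁,
      finrank_span_singleton (LinearMap.BilinForm.ne_zero_of_not_isOrtho_self g1' hg1g1), hd₁]
    omega
  -- orthonormal basis of W₂
  obtain ⟨h0, hh0⟩ := exists_orthonormal B₂ hsymB₂ hndB₂
  set h : Basis (Fin m) F W₂ := h0.reindex (finCongr hd₂) with hh
  have hh' : ∀ i j : Fin m, B₂ (h i) (h j) = if i = j then 1 else 0 := by
    intro i j
    rw [hh, Module.Basis.reindex_apply, Module.Basis.reindex_apply, hh0]
    simp [Fin.ext_iff]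
  set w : Fin m → V := fun i => ((h i : W₁) : V) with hwdef
  have hww : ∀ i j, B (w i) (w j) = if i = j then 1 else 0 := fun i j => hh' i j
  have hg0w : ∀ i, B g0 (w i) = 0 := by
    intro i
    have hmem : (w i : V) ∈ B.orthogonal (F ∙ g0) := ((h i : W₁)).2
    exact LinearMap.BilinForm.mem_orthogonal_iff.mp hmem g0 (Submodule.mem_span_singleton_self g0)
  have hg1w : ∀ i, B g1 (w i) = 0 := by
    intro i
    have h2 : (h i : W₁) ∈ B₁.orthogonal (F ∙ g1') := (h i).2
    exact LinearMap.BilinForm.mem_orthogonal_iff.mp h2 g1' (Submodule.mem_span_singleton_self g1')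
  have hwg0 : ∀ i, B (w i) g0 = 0 := fun i => by rw [hB.eq (w i) g0, hg0w i]
  have hwg1 : ∀ i, B (w i) g1 = 0 := fun i => by rw [hB.eq (w i) g1, hg1w i]
  -- assemble
  set v : Fin (m + 2) → V := Fin.cons g0 (Fin.cons g1 w) with hvdef
  have hv0 : v 0 = g0 := by rw [hvdef, Fin.cons_zero]
  have hv1 : v 1 = g1 := by
    rw [hvdef, show (1 : Fin (m + 2)) = Fin.succ 0 from rfl, Fin.cons_succ, Fin.cons_zero]
  have hv : ∀ i j, B (v i) (v j) = if i = j then 1 else 0 := by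
    have hne1 : ∀ j : Fin m, (1 : Fin (m + 2)) ≠ j.succ.succ := by
      intro j hj
      rw [Fin.ext_iff] at hj
      simp at hj
    intro i j
    induction i using Fin.cases with
    | zero =>
      induction j using Fin.cases with
      | zero => rw [hv0, e00, if_pos rfl]
      | succ j =>
        rw [hv0, hvdef]
        simp only [Fin.cons_succ]
        induction j using Fin.cases with
        | zero =>
          simp only [Fin.cons_zero]
          rw [e01, if_neg (Fin.succ_ne_zero 0).symm]
        | succ j =>
          simp only [Fin.cons_succ]
          rw [hg0w, if_neg (Fin.succ_ne_zero _).symm]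
    | succ i =>
      induction j using Fin.cases with
      | zero =>
        rw [hv0, hvdef]
        simp only [Fin.cons_succ]
        induction i using Fin.cases with
        | zero =>
          simp only [Fin.cons_zero]
          rw [e10, if_neg (Fin.succ_ne_zero 0)]
        | succ i =>
          simp only [Fin.cons_succ]
          rw [hwg0, if_neg (Fin.succ_ne_zero _)]
      | succ j =>
        rw [hvdef]
        simp only [Fin.cons_succ]
        induction i using Fin.cases with
        | zero =>
          induction j using Fin.cases with
          | zero =>
            simp only [Fin.cons_zero]
            rw [e11]
            simp
          | succ j =>
            simp only [Fin.cons_zero, Fin.cons_succ]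
            rw [hg1w, if_neg (by rw [Fin.succ_zero_eq_one]; exact hne1 j)]
        | succ i =>
          induction j using Fin.cases with
          | zero =>
            simp only [Fin.cons_zero, Fin.cons_succ]
            rw [hwg1, if_neg (by rw [Fin.succ_zero_eq_one]; exact fun hh => hne1 i hh.symm)]
          | succ j =>
            simp only [Fin.cons_succ]
            rcases eq_or_ne i j with rfl | hij
            · rw [hww, if_pos rfl, if_pos rfl]
            · rw [hww, if_neg hij, if_neg (by simp [Fin.succ_inj, hij])]
  have hOrtho : B.iIsOrtho v := LinearMap.BilinForm.iIsOrtho_def.mpr fun i j hij => by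
    rw [hv i j, if_neg hij]
  have hdiag : ∀ i, ¬ B.IsOrtho (v i) (v i) := fun i => by
    rw [LinearMap.BilinForm.isOrtho_def, hv i i, if_pos rfl]
    exact one_ne_zero
  have hli : LinearIndependent F v :=
    LinearMap.BilinForm.linearIndependent_of_iIsOrtho hOrtho hdiag
  have hcard : Fintype.card (Fin (m + 2)) = finrank F V := by simp [hm]
  refine ⟨basisOfLinearIndependentOfCardEqFinrank hli hcard, ?_, ?_⟩
  · intro i j
    simp only [coe_basisOfLinearIndependentOfCardEqFinrank]
    exact hv i j
  · simp only [coe_basisOfLinearIndependentOfCardEqFinrank]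
    rw [hv0, hv1]
    exact hu'


/-- The evolution algebra `I_n` realized on `Fin (n+2) → F`: `eₖ² = e₀ + I·e₁` for all
`k` (where `I² = -1`) and `eₖeₗ = 0` for `k ≠ l`. -/
def inMul {F : Type*} [Field F] {n : ℕ} (I : F) (x y : Fin (n + 2) → F) :
    Fin (n + 2) → F :=
  fun k => if k = 0 then ∑ i, x i * y i
    else if k = 1 then I * ∑ i, x i * y i else 0

/-- The product of two subspaces. -/
def mulSub {F : Type*} [Field F] {A : Type*} [NonUnitalNonAssocRing A] [Module F A]
    (P Q : Submodule F A) : Submodule F A :=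
  Submodule.span F {z | ∃ x ∈ P, ∃ y ∈ Q, z = x * y}

/-- **Classification, case `(A²)² = 0`.** A non-degenerate evolution algebra `A` of
dimension `n ≥ 2` over an algebraically closed field of characteristic zero with
`dim A² = 1` and `(A²)² = 0` is isomorphic to `I_n`. -/
theorem stmt_6 {F : Type*} [Field F] [IsAlgClosed F] [CharZero F]
    (I : F) (hI : I * I = -1)
    {A : Type*} [NonUnitalNonAssocRing A] [Module F A]
    [SMulCommClass F A A] [IsScalarTower F A A]
    {n : ℕ} (b : Basis (Fin (n + 2)) F A)
    (hb : ∀ i j : Fin (n + 2), i ≠ j → b i * b j = 0)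
    (hnd : ∀ x : A, (∀ a : A, x * a = 0 ∧ a * x = 0) → x = 0)
    (hsq : finrank F (mulSub (⊤ : Submodule F A) ⊤) = 1)
    (hsq2 : mulSub (mulSub (⊤ : Submodule F A) ⊤) (mulSub (⊤ : Submodule F A) ⊤) = ⊥) :
    ∃ φ : A ≃ₗ[F] (Fin (n + 2) → F), ∀ x y : A, φ (x * y) = inMul I (φ x) (φ y) := by
  haveI : FiniteDimensional F A := Module.Finite.of_basis b
  -- squares lie in A²
  have hmemSq : ∀ x y : A, x * y ∈ mulSub (⊤ : Submodule F A) ⊤ := fun x y =>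
    Submodule.subset_span ⟨x, trivial, y, trivial, rfl⟩
  obtain ⟨u₀, hu₀ne, hspan⟩ := finrank_eq_one_iff'.mp hsq
  set u : A := (u₀ : A) with hudef
  have hune : u ≠ 0 := fun h => hu₀ne (Subtype.ext h)
  choose c hc using fun i : Fin (n + 2) => hspan ⟨b i * b i, hmemSq (b i) (b i)⟩
  have hc' : ∀ i, b i * b i = c i • u := fun i =>
    (congrArg Subtype.val (hc i)).symm
  -- general product expansion
  have expand : ∀ x y : A, x * y = ∑ i, (b.repr x i * b.repr y i) • (b i * b i) := by
    intro x y
    calc x * y = (∑ i, b.repr x i • b i) * y := by rw [b.sum_repr]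
      _ = ∑ i, b.repr x i • (b i * y) := by
          rw [Finset.sum_mul]
          exact Finset.sum_congr rfl fun i _ => smul_mul_assoc _ _ _
      _ = ∑ i, b.repr x i • (b i * ∑ j, b.repr y j • b j) := by rw [b.sum_repr]
      _ = ∑ i, b.repr x i • (∑ j, b.repr y j • (b i * b j)) := by
          refine Finset.sum_congr rfl fun i _ => ?_
          rw [Finset.mul_sum]
          congr 1
          exact Finset.sum_congr rfl fun j _ => (mul_smul_comm _ _ _)
      _ = ∑ i, b.repr x i • (b.repr y i • (b i * b i)) := by
          refine Finset.sum_congr rfl fun i _ => ?_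
          congr 1
          refine Finset.sum_eq_single i (fun j _ hji => ?_) (fun hni => absurd (Finset.mem_univ i) hni)
          rw [hb i j (Ne.symm hji), smul_zero]
      _ = ∑ i, (b.repr x i * b.repr y i) • (b i * b i) := by
          exact Finset.sum_congr rfl fun i _ => (smul_smul _ _ _)
  -- c i ≠ 0
  have hcne : ∀ i, c i ≠ 0 := by
    intro i hci
    have hsq0 : b i * b i = 0 := by rw [hc' i, hci, zero_smul]
    have : b i = 0 := by
      apply hnd
      intro a
      constructor
      · rw [expand (b i) a]
        apply Finset.sum_eq_zero
        intro j _
        rcases eq_or_ne j i with rfl | hij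
        · rw [hsq0, smul_zero]
        · rw [b.repr_self_apply, if_neg (Ne.symm hij), zero_mul, zero_smul]
      · rw [expand a (b i)]
        apply Finset.sum_eq_zero
        intro j _
        rcases eq_or_ne j i with rfl | hij
        · rw [hsq0, smul_zero]
        · rw [b.repr_self_apply, if_neg (Ne.symm hij), mul_zero, zero_smul]
    exact b.ne_zero i this
  -- the bilinear form
  set B : LinearMap.BilinForm F A := LinearMap.mk₂ F
      (fun x y => ∑ i, c i * (b.repr x i * b.repr y i))
      (fun x x' y => by
        simp only [map_add, Finsupp.add_apply, add_mul, mul_add, Finset.sum_add_distrib])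
      (fun a x y => by
        simp only [map_smul, Finsupp.smul_apply, smul_eq_mul, Finset.mul_sum]
        exact Finset.sum_congr rfl fun i _ => by ring)
      (fun x y y' => by
        simp only [map_add, Finsupp.add_apply, add_mul, mul_add, Finset.sum_add_distrib])
      (fun a x y => by
        simp only [map_smul, Finsupp.smul_apply, smul_eq_mul, Finset.mul_sum]
        exact Finset.sum_congr rfl fun i _ => by ring) with hBdef
  have hBapp : ∀ x y : A, B x y = ∑ i, c i * (b.repr x i * b.repr y i) := fun x y => rfl
  -- product formula
  have hBmul : ∀ x y : A, x * y = B x y • u := by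
    intro x y
    rw [expand x y, hBapp, Finset.sum_smul]
    refine Finset.sum_congr rfl fun i _ => ?_
    rw [hc' i, smul_smul]
    congr 1
    ring
  -- symmetry
  have hBsymm : B.IsSymm := by
    refine ⟨fun x y => ?_⟩
    simp only [RingHom.id_apply, hBapp]
    exact Finset.sum_congr rfl fun i _ => by ring
  -- nondegeneracy
  have hBnd : B.Nondegenerate := by
    refine (LinearMap.IsRefl.nondegenerate_iff_separatingLeft (LinearMap.BilinForm.IsSymm.isRefl hBsymm)).mpr ?_
    intro x hx
    refine b.ext_elem fun j => ?_
    have hj := hx (b j)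
    rw [hBapp] at hj
    rw [Finset.sum_eq_single j (fun i _ hij => by
        rw [b.repr_self_apply, if_neg (Ne.symm hij), mul_zero, mul_zero])
      (fun hni => absurd (Finset.mem_univ j) hni)] at hj
    rw [b.repr_self_apply, if_pos rfl, mul_one] at hj
    rw [map_zero, Finsupp.zero_apply]
    exact (mul_eq_zero.mp hj).resolve_left (hcne j)
  -- isotropy
  have hBuu : B u u = 0 := by
    have huusq : u * u = 0 := by
      have : u * u ∈ mulSub (mulSub (⊤ : Submodule F A) ⊤) (mulSub (⊤ : Submodule F A) ⊤) :=
        Submodule.subset_span ⟨u, u₀.2, u, u₀.2, rfl⟩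
      rw [hsq2] at this
      exact (Submodule.mem_bot F).mp this
    have := hBmul u u
    rw [huusq] at this
    exact (smul_eq_zero.mp this.symm).resolve_right hune
  -- dimension
  have hdim : finrank F A = n + 2 := by
    rw [finrank_eq_card_basis b, Fintype.card_fin]
  -- apply the key lemma
  obtain ⟨g, hg, hgu⟩ := key_basis I hI B hBsymm hBnd hune hBuu hdim
  refine ⟨g.equivFun, fun x y => ?_⟩
  -- the coordinates of u
  have hucoord : ∀ k, g.equivFun u k = if k = 0 then 1 else if k = 1 then I else 0 := by
    intro k
    rw [hgu]
    simp only [map_add, map_smul, Pi.add_apply, Pi.smul_apply, smul_eq_mul,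
      Basis.equivFun_self]
    rcases eq_or_ne k 0 with rfl | hk0
    · simp [Fin.ext_iff]
    · rcases eq_or_ne k 1 with rfl | hk1
      · simp [Fin.ext_iff]
      · simp [hk0, hk1, Ne.symm hk0, Ne.symm hk1]
  -- B in the new coordinates
  have hsum : ∀ x y : A, B x y = ∑ i, g.equivFun x i * g.equivFun y i := by
    intro x y
    conv_lhs => rw [← g.sum_equivFun x, ← g.sum_equivFun y]
    rw [map_sum]
    refine Finset.sum_congr rfl fun j _ => ?_
    rw [map_smul, smul_eq_mul, map_sum, LinearMap.sum_apply]
    simp only [map_smul, LinearMap.smul_apply, smul_eq_mul, hg, mul_ite, mul_one, mul_zero]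
    rw [Finset.sum_ite_eq' Finset.univ j]
    simp only [Finset.mem_univ, if_true]
    ring
  -- conclusion
  funext k
  rw [hBmul x y, map_smul, Pi.smul_apply, smul_eq_mul, hucoord k]
  show _ = inMul I (g.equivFun x) (g.equivFun y) k
  rw [inMul, ← hsum x y]
  rcases eq_or_ne k 0 with rfl | hk0
  · rw [if_pos rfl, if_pos rfl, mul_one]
  · rcases eq_or_ne k 1 with rfl | hk1
    · have h10 : (1 : Fin (n + 2)) ≠ 0 := by simp [Fin.ext_iff]
      rw [if_neg h10, if_pos rfl, if_neg h10, if_pos rfl, mul_comm]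
    · rw [if_neg hk0, if_neg hk1, if_neg hk0, if_neg hk1, mul_zero]
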